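/- Let H = (a_1,…,a_n; ε_1,…,ε_n) be a naive EGK datum of even length n ≥ 2. Write a_i(Y) := a_i(H,Y) and b_i(Y) := a_i(H_{n−1},Y), with the convention b_m(Y) := 0 if m < 0 or m > 𝔢_{n−1}. Then for every 0 ≤ l ≤ 𝔢_n: a_l(Y) = Σ_{j≥0} b_{l−2j}(Y)·Y^{l−2j} − ε_n·Σ_{j≥0} b_{l−1−2j}(Y)·Y^{l−2−2j} − Σ_{j≥0} b_{𝔢_n+2−l+2j}(Y)·Y^{𝔢_n+2−l+2j} + ε_n·Σ_{j≥0} b_{𝔢_n+1−l+2j}(Y)·Y^{𝔢_n−l+2j} (all sums are finite by the vanishing convention on b). -/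

import Mathlib

open scoped Classical

noncomputable section

/-- `𝔢_i` attached to a sequence `a` (1-based index `i`; `a k` is `a_{k+1}`). -/
def eInv (a : ℕ → ℕ) (i : ℕ) : ℕ :=
  if Odd i then ∑ k ∈ Finset.range i, a k
  else 2 * ((∑ k ∈ Finset.range i, a k) / 2)

/-- A naive EGK datum of length `n`, given by `a k = a_{k+1}` and `ε k = ε_{k+1}`. -/
structure IsNEGK (n : ℕ) (a : ℕ → ℕ) (ε : ℕ → ℤ) : Prop where
  pos : 0 < n
  mono : ∀ i, i + 1 < n → a i ≤ a (i + 1)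
  sign : ∀ i, i < n → ε i = 0 ∨ ε i = 1 ∨ ε i = -1
  cond2 : ∀ i, i < n → Odd i → (ε i ≠ 0 ↔ Even (∑ k ∈ Finset.range (i + 1), a k))
  cond3 : ∀ i, i < n → Even i → ε i ≠ 0
  cond4 : ε 0 = 1
  cond5 : ∀ i, i < n → 2 ≤ i → Even i → Even (∑ k ∈ Finset.range i, a k) →
    ε i = ε (i - 1) ^ (a i + a (i - 1)) * ε (i - 2)

/-- The factors `C` (for even `i`) and `D` (for odd `i`), written in the variables
`u = X^{1/2}`, `v = Y^{1/2}`. -/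
def Cfun {K : Type} [Field K] (i : ℕ) (e et : ℕ) (ξ : K) (v u : K) : K :=
  if Even i then
    v ^ et * u ^ (-((e : ℤ) - (et : ℤ)) - 2) * (1 - ξ * (v⁻¹) ^ 2 * u ^ 2) /
      ((u⁻¹) ^ 2 - u ^ 2)
  else v ^ et * u ^ (-((e : ℤ) - (et : ℤ))) / (1 - ξ * u ^ 2)

/-- The rational function `𝓕(H;Y,X)` of a naive EGK datum of length `N`,
written as a function of `v = Y^{1/2}` and `u = X^{1/2}`. -/
def FF {K : Type} [Field K] (a : ℕ → ℕ) (ε : ℕ → ℤ) : ℕ → K → K → K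
  | 0 => fun _ _ => 1
  | 1 => fun _ u => ∑ i ∈ Finset.range (a 0 + 1), u ^ (2 * (i : ℤ) - (a 0 : ℤ))
  | (m + 2) => fun v u =>
      (Cfun (m + 2) (eInv a (m + 2)) (eInv a (m + 1))
          (if Even (m + 2) then ((ε (m + 1) : ℤ) : K) else ((ε m : ℤ) : K)) v u) *
            FF a ε (m + 1) v (v * u) +
        (if Even (m + 2) then (1 : K) else ((ε (m + 1) : ℤ) : K)) *
          (Cfun (m + 2) (eInv a (m + 2)) (eInv a (m + 1))
            (if Even (m + 2) then ((ε (m + 1) : ℤ) : K) else ((ε m : ℤ) : K)) v u⁻¹) *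
            FF a ε (m + 1) v (v * u⁻¹)

/-- The field `ℚ(Y^{1/2})(X^{1/2})` in which the generic identities are stated. -/
abbrev KK : Type := RatFunc (RatFunc ℚ)

/-- The generic point `u = X^{1/2}`. -/
def uGen : KK := RatFunc.X

/-- The generic point `v = Y^{1/2}`. -/
def vGen : KK := RatFunc.C RatFunc.X

end

/-- `Y^m` (with `m ∈ ℤ`), i.e. `v^{2m}` at the generic point. -/
noncomputable def Yz (m : ℤ) : KK := vGen ^ (2 * m)


-- ======================= auxiliary development =======================

section Aux

theorem uGen_trans : Transcendental (RatFunc ℚ) uGen := by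
  rw [show uGen = algebraMap (Polynomial (RatFunc ℚ)) KK Polynomial.X from
    (RatFunc.algebraMap_X).symm]
  exact (transcendental_algebraMap_iff (IsFractionRing.injective _ _)).2
    (Polynomial.transcendental_X _)

theorem uGen_ne : uGen ≠ 0 := RatFunc.X_ne_zero

theorem vGen_ne : vGen ≠ 0 := by
  simpa [vGen, map_eq_zero] using RatFunc.X_ne_zero (K := ℚ)

theorem trans_scale (c : RatFunc ℚ) (hc : c ≠ 0) {x : KK}
    (hx : Transcendental (RatFunc ℚ) x) :
    Transcendental (RatFunc ℚ) (RatFunc.C c * x) := by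
  intro halg
  apply hx
  have h1 : IsAlgebraic (RatFunc ℚ) (RatFunc.C c⁻¹) := by
    rw [← RatFunc.algebraMap_eq_C]; exact isAlgebraic_algebraMap _
  have h2 := (isAlgebraic_iff_isIntegral.2 ((isAlgebraic_iff_isIntegral.1 h1).mul
    (isAlgebraic_iff_isIntegral.1 halg)))
  rwa [show RatFunc.C c⁻¹ * (RatFunc.C c * x) = x by
    rw [← mul_assoc, ← map_mul, inv_mul_cancel₀ hc, map_one, one_mul]] at h2

theorem trans_inv {x : KK} (hx : Transcendental (RatFunc ℚ) x) :
    Transcendental (RatFunc ℚ) x⁻¹ := by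
  intro halg
  exact hx (by simpa using halg.inv)

theorem vu_trans : Transcendental (RatFunc ℚ) (vGen * uGen) :=
  trans_scale _ RatFunc.X_ne_zero uGen_trans

theorem vui_trans : Transcendental (RatFunc ℚ) (vGen * uGen⁻¹) :=
  trans_scale _ RatFunc.X_ne_zero (trans_inv uGen_trans)

/-- Substitution `X^{1/2} ↦ t` as a field homomorphism. -/
noncomputable def subHom {t : KK} (ht : Transcendental (RatFunc ℚ) t) : KK →+* KK :=
  IsFractionRing.lift (A := Polynomial (RatFunc ℚ)) (g := (Polynomial.aeval t).toRingHom)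
    (transcendental_iff_injective.1 ht)

theorem subHom_C {t : KK} (ht : Transcendental (RatFunc ℚ) t) (g : RatFunc ℚ) :
    subHom ht (RatFunc.C g) = RatFunc.C g := by
  rw [← RatFunc.algebraMap_C, subHom, IsFractionRing.lift_algebraMap]
  simp [← RatFunc.algebraMap_eq_C]

theorem subHom_X {t : KK} (ht : Transcendental (RatFunc ℚ) t) :
    subHom ht uGen = t := by
  rw [show uGen = algebraMap (Polynomial (RatFunc ℚ)) KK Polynomial.X from
    (RatFunc.algebraMap_X).symm, subHom, IsFractionRing.lift_algebraMap]
  simp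

theorem subHom_v {t : KK} (ht : Transcendental (RatFunc ℚ) t) :
    subHom ht vGen = vGen := subHom_C ht _

theorem map_Cfun (φ : KK →+* KK) (i e et : ℕ) (ξ v u : KK) :
    φ (Cfun i e et ξ v u) = Cfun i e et (φ ξ) (φ v) (φ u) := by
  simp only [Cfun]
  split <;> simp [map_div₀, map_zpow₀, map_inv₀]

theorem map_FF (a : ℕ → ℕ) (ε : ℕ → ℤ) (φ : KK →+* KK) :
    ∀ m (v u : KK), φ (FF a ε m v u) = FF a ε m (φ v) (φ u)
  | 0, v, u => by simp [FF]
  | 1, v, u => by simp [FF, map_zpow₀]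
  | (m+2), v, u => by
    simp only [FF]
    rw [map_add, map_mul, map_mul, map_mul, map_Cfun, map_Cfun,
      map_FF a ε φ (m+1) v (v*u), map_FF a ε φ (m+1) v (v*u⁻¹)]
    simp [apply_ite φ, map_inv₀]

theorem extractCoeff (M : ℕ) (c : ℕ → KK) (hc : ∀ l, ∃ g, c l = RatFunc.C g)
    (h : ∑ l ∈ Finset.range M, c l * uGen ^ (2 * l) = 0) : ∀ l < M, c l = 0 := by
  choose g hg using hc
  set q : Polynomial (RatFunc ℚ) :=
    ∑ l ∈ Finset.range M, Polynomial.C (g l) * Polynomial.X ^ (2 * l) with hq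
  have hmap : algebraMap (Polynomial (RatFunc ℚ)) KK q = 0 := by
    rw [hq, map_sum]
    rw [show (0 : KK) = ∑ l ∈ Finset.range M, c l * uGen ^ (2 * l) from h.symm]
    refine Finset.sum_congr rfl fun l _ => ?_
    rw [map_mul, map_pow, RatFunc.algebraMap_C, RatFunc.algebraMap_X, hg l, uGen]
  have hq0 : q = 0 := by
    have := IsFractionRing.injective (Polynomial (RatFunc ℚ)) KK
    exact this (by simpa using hmap)
  intro l hl
  have : q.coeff (2 * l) = g l := by
    rw [hq, Polynomial.finset_sum_coeff]
    rw [Finset.sum_eq_single l]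
    · simp [Polynomial.coeff_C_mul, Polynomial.coeff_X_pow]
    · intro j _ hj
      rw [Polynomial.coeff_C_mul, Polynomial.coeff_X_pow, if_neg (by omega), mul_zero]
    · intro hl2; exact absurd (Finset.mem_range.2 hl) hl2
  rw [hg l, ← this, hq0]
  simp

theorem L_eEven (a : ℕ → ℕ) {n : ℕ} (hne : Even n) : Even (eInv a n) := by
  rw [eInv, if_neg (Nat.not_odd_iff_even.mpr hne)]
  exact even_two_mul _

theorem L_etle {n : ℕ} {a : ℕ → ℕ} {ε : ℕ → ℤ} (h : IsNEGK n a ε) (hne : Even n)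
    (hn2 : 2 ≤ n) : eInv a (n - 1) ≤ eInv a n := by
  have hodd : Odd (n - 1) := by
    rcases hne with ⟨k, hk⟩; exact ⟨k - 1, by omega⟩
  rw [eInv, if_pos hodd, eInv, if_neg (Nat.not_odd_iff_even.mpr hne)]
  have hS : ∑ k ∈ Finset.range n, a k = (∑ k ∈ Finset.range (n-1), a k) + a (n-1) := by
    have h2 := Finset.sum_range_succ a (n-1)
    rwa [show n - 1 + 1 = n from by omega] at h2
  by_cases ha : a (n-1) = 0
  · have hmono : ∀ j, j < n → ∀ i, i ≤ j → a i ≤ a j := by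
      intro j hj
      induction j with
      | zero =>
        intro i hi
        have : i = 0 := by omega
        subst this; exact le_rfl
      | succ m ih =>
        intro i hi
        rcases Nat.eq_or_lt_of_le hi with rfl | hlt
        · exact le_rfl
        · exact le_trans (ih (by omega) i (by omega)) (h.mono m (by omega))
    have hz : ∀ k ∈ Finset.range (n-1), a k = 0 := by
      intro k hk
      simp only [Finset.mem_range] at hk
      have := hmono (n-1) (by omega) k (by omega)
      omega
    have h1 : ∑ k ∈ Finset.range (n-1), a k = 0 := Finset.sum_eq_zero hz
    omega
  · omega

end Aux

-- telescoping machinery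

noncomputable def qzF (Bz : ℤ → KK) (m : ℤ) : KK := Bz m * Yz m
noncomputable def PzF (Bz : ℤ → KK) (N : ℕ) (l : ℤ) : KK :=
  ∑ j ∈ Finset.range N, qzF Bz (l - 2 * (j : ℤ))
noncomputable def QzF (Bz : ℤ → KK) (N : ℕ) (l : ℤ) : KK :=
  ∑ j ∈ Finset.range N, qzF Bz (l + 2 * (j : ℤ))
noncomputable def TzF (Bz : ℤ → KK) (ξ : KK) (e : ℕ) (N : ℕ) (l : ℤ) : KK :=
  PzF Bz N l - ξ * Yz (-1) * PzF Bz N (l - 1) - QzF Bz N ((e : ℤ) + 2 - l) +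
    ξ * Yz (-1) * QzF Bz N ((e : ℤ) + 1 - l)
noncomputable def rzF (Bz : ℤ → KK) (ξ : KK) (e : ℕ) (l : ℤ) : KK :=
  qzF Bz l - ξ * Yz (-1) * qzF Bz (l - 1) - qzF Bz ((e : ℤ) + 2 - l) +
    ξ * Yz (-1) * qzF Bz ((e : ℤ) + 1 - l)

section Comb
variable (Bz : ℤ → KK) (ξ : KK) (e et N : ℕ)

theorem L_P0 (h0 : ∀ m : ℤ, m < 0 ∨ (et : ℤ) < m → qzF Bz m = 0) {l : ℤ} (hl : l < 0) : PzF Bz N l = 0 :=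
  Finset.sum_eq_zero fun j _ => h0 _ (Or.inl (by omega))

theorem L_Q0 (h0 : ∀ m : ℤ, m < 0 ∨ (et : ℤ) < m → qzF Bz m = 0) {l : ℤ} (hl : (et : ℤ) < l) : QzF Bz N l = 0 :=
  Finset.sum_eq_zero fun j _ => h0 _ (Or.inr (by omega))

theorem L_Psub (l : ℤ) :
    PzF Bz N l - PzF Bz N (l - 2) = qzF Bz l - qzF Bz (l - 2 * N) := by
  have h1 : PzF Bz N (l - 2) = ∑ j ∈ Finset.range N, qzF Bz (l - 2 * ((j : ℤ) + 1)) := by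
    refine Finset.sum_congr rfl fun j _ => ?_
    congr 1; ring
  have h2 : ∑ j ∈ Finset.range (N + 1), qzF Bz (l - 2 * (j : ℤ)) =
      (∑ j ∈ Finset.range N, qzF Bz (l - 2 * ((j : ℤ) + 1))) + qzF Bz l := by
    rw [Finset.sum_range_succ']
    push_cast
    simp
  have h3 : ∑ j ∈ Finset.range (N + 1), qzF Bz (l - 2 * (j : ℤ)) =
      PzF Bz N l + qzF Bz (l - 2 * N) := by
    rw [Finset.sum_range_succ]; rfl
  rw [h1]
  have := h3.symm.trans h2
  linear_combination this

theorem L_Qsub (l : ℤ) :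
    QzF Bz N l - QzF Bz N (l + 2) = qzF Bz l - qzF Bz (l + 2 * N) := by
  have h1 : QzF Bz N (l + 2) = ∑ j ∈ Finset.range N, qzF Bz (l + 2 * ((j : ℤ) + 1)) := by
    refine Finset.sum_congr rfl fun j _ => ?_
    congr 1; ring
  have h2 : ∑ j ∈ Finset.range (N + 1), qzF Bz (l + 2 * (j : ℤ)) =
      (∑ j ∈ Finset.range N, qzF Bz (l + 2 * ((j : ℤ) + 1))) + qzF Bz l := by
    rw [Finset.sum_range_succ']
    push_cast
    simp
  have h3 : ∑ j ∈ Finset.range (N + 1), qzF Bz (l + 2 * (j : ℤ)) =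
      QzF Bz N l + qzF Bz (l + 2 * N) := by
    rw [Finset.sum_range_succ]; rfl
  rw [h1]
  have := h3.symm.trans h2
  linear_combination this

theorem L_PQ (h0 : ∀ m : ℤ, m < 0 ∨ (et : ℤ) < m → qzF Bz m = 0) (M : ℕ) (hMN : M < N) {c c' : ℤ} (hc : c = c' + 2 * M) (hc1 : c' ≤ 1)
    (hc2 : (et : ℤ) < c + 2) : PzF Bz N c = QzF Bz N c' := by
  have hP : PzF Bz N c = ∑ j ∈ Finset.range (M + 1), qzF Bz (c - 2 * (j : ℤ)) := by
    rw [PzF]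
    refine (Finset.sum_subset (Finset.range_subset_range.2 (by omega)) fun j _ hj => ?_).symm
    exact h0 _ (Or.inl (by simp only [Finset.mem_range] at hj; omega))
  have hQ : QzF Bz N c' = ∑ j ∈ Finset.range (M + 1), qzF Bz (c' + 2 * (j : ℤ)) := by
    rw [QzF]
    refine (Finset.sum_subset (Finset.range_subset_range.2 (by omega)) fun j _ hj => ?_).symm
    exact h0 _ (Or.inr (by simp only [Finset.mem_range] at hj; omega))
  rw [hP, hQ, ← Finset.sum_range_reflect]
  refine Finset.sum_congr rfl fun j hj => ?_
  simp only [Finset.mem_range] at hj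
  congr 1
  push_cast
  omega

theorem L_Tsub (h0 : ∀ m : ℤ, m < 0 ∨ (et : ℤ) < m → qzF Bz m = 0) {l : ℤ} (hl : l ≤ (e : ℤ) + 2) (hee : et ≤ e) (hN : e + et + 5 ≤ N) :
    TzF Bz ξ e N l - TzF Bz ξ e N (l - 2) = rzF Bz ξ e l := by
  have e1 : PzF Bz N l - PzF Bz N (l - 2) = qzF Bz l := by
    rw [L_Psub, h0 (l - 2 * N) (Or.inl (by omega)), sub_zero]
  have e2 : PzF Bz N (l - 1) - PzF Bz N (l - 2 - 1) = qzF Bz (l - 1) := by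
    have := L_Psub Bz N (l - 1)
    rw [h0 (l - 1 - 2 * N) (Or.inl (by omega)), sub_zero] at this
    rw [show l - 2 - 1 = l - 1 - 2 by ring, this]
  have e3 : QzF Bz N ((e : ℤ) + 2 - l) - QzF Bz N ((e : ℤ) + 2 - (l - 2)) =
      qzF Bz ((e : ℤ) + 2 - l) := by
    have := L_Qsub Bz N ((e : ℤ) + 2 - l)
    rw [h0 ((e : ℤ) + 2 - l + 2 * N) (Or.inr (by omega)), sub_zero] at this
    rw [show (e : ℤ) + 2 - (l - 2) = (e : ℤ) + 2 - l + 2 by ring, this]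
  have e4 : QzF Bz N ((e : ℤ) + 1 - l) - QzF Bz N ((e : ℤ) + 1 - (l - 2)) =
      qzF Bz ((e : ℤ) + 1 - l) := by
    have := L_Qsub Bz N ((e : ℤ) + 1 - l)
    rw [h0 ((e : ℤ) + 1 - l + 2 * N) (Or.inr (by omega)), sub_zero] at this
    rw [show (e : ℤ) + 1 - (l - 2) = (e : ℤ) + 1 - l + 2 by ring, this]
  rw [TzF, TzF, rzF]
  rw [← e1, ← e2, ← e3, ← e4]
  ring

theorem L_Tneg (h0 : ∀ m : ℤ, m < 0 ∨ (et : ℤ) < m → qzF Bz m = 0) {l : ℤ} (hl : l < 0) (hee : et ≤ e) : TzF Bz ξ e N l = 0 := by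
  rw [TzF, L_P0 Bz et N h0 (by omega), L_P0 Bz et N h0 (by omega),
    L_Q0 Bz et N h0 (by omega), L_Q0 Bz et N h0 (by omega)]
  ring

theorem L_Ttop (h0 : ∀ m : ℤ, m < 0 ∨ (et : ℤ) < m → qzF Bz m = 0) (hee : et ≤ e) (heven : Even e) (hN : e + et + 5 ≤ N) :
    TzF Bz ξ e N ((e : ℤ) + 1) = 0 ∧ TzF Bz ξ e N ((e : ℤ) + 2) = 0 := by
  obtain ⟨c, hc⟩ := heven
  constructor
  · rw [TzF, show (e:ℤ) + 2 - ((e:ℤ)+1) = 1 by ring, show (e:ℤ) + 1 - ((e:ℤ)+1) = 0 by ring,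
      show (e:ℤ) + 1 - 1 = (e:ℤ) by ring]
    rw [L_PQ Bz et N h0 c (by omega) (show (e:ℤ)+1 = 1 + 2*c by push_cast; omega) (by omega) (by omega)]
    rw [L_PQ Bz et N h0 c (by omega) (show (e:ℤ) = 0 + 2*c by push_cast; omega) (by omega) (by omega)]
    ring
  · rw [TzF, show (e:ℤ) + 2 - ((e:ℤ)+2) = 0 by ring, show (e:ℤ) + 1 - ((e:ℤ)+2) = -1 by ring]
    rw [L_PQ Bz et N h0 (c+1) (by omega) (show (e:ℤ)+2 = 0 + 2*(c+1) by push_cast; omega) (by omega) (by omega)]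
    rw [L_PQ Bz et N h0 (c+1) (by omega) (show (e:ℤ)+2-1 = -1 + 2*(c+1) by push_cast; omega) (by omega) (by omega)]
    ring
end Comb

theorem L_Yadd (hv : vGen ≠ 0) (a b : ℤ) : Yz a * Yz b = Yz (a + b) := by
  rw [Yz, Yz, Yz, ← zpow_add₀ hv]
  congr 1; ring

theorem L_Ynat (i : ℕ) : Yz (i : ℤ) = vGen ^ (2 * i) := by
  rw [Yz, ← zpow_natCast]
  congr 1

theorem L_Yneg1 (hv : vGen ≠ 0) : Yz (-1) = (vGen⁻¹) ^ 2 := by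
  rw [Yz, show (2 * (-1) : ℤ) = -((2 : ℕ) : ℤ) by norm_num, zpow_neg, zpow_natCast, inv_pow]

section Comb2
variable (Bz : ℤ → KK) (ξ : KK) (e et N : ℕ)

theorem L_step2a (h0 : ∀ m : ℤ, m < 0 ∨ (et : ℤ) < m → qzF Bz m = 0)
    (hee : et ≤ e) (heven : Even e) (hN : e + et + 5 ≤ N) :
    ∑ l ∈ Finset.range (e + 1), TzF Bz ξ e N l * uGen ^ (2 * l) * (1 - uGen ^ 4) =
      ∑ m ∈ Finset.range (e + 3), rzF Bz ξ e m * uGen ^ (2 * m) := by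
  have hexp : ∑ l ∈ Finset.range (e + 1), TzF Bz ξ e N l * uGen ^ (2 * l) * (1 - uGen ^ 4) =
      (∑ l ∈ Finset.range (e + 1), TzF Bz ξ e N l * uGen ^ (2 * l)) -
        ∑ l ∈ Finset.range (e + 1), TzF Bz ξ e N l * uGen ^ (2 * l + 4) := by
    rw [← Finset.sum_sub_distrib]
    refine Finset.sum_congr rfl fun l _ => ?_
    ring
  have hT1 : ∑ l ∈ Finset.range (e + 1), TzF Bz ξ e N l * uGen ^ (2 * l) =
      ∑ l ∈ Finset.range (e + 3), TzF Bz ξ e N l * uGen ^ (2 * l) := by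
    refine Finset.sum_subset (Finset.range_subset_range.2 (by omega)) fun l hl hl' => ?_
    simp only [Finset.mem_range] at hl hl'
    have : l = e + 1 ∨ l = e + 2 := by omega
    rcases this with rfl | rfl
    · rw [show ((e + 1 : ℕ) : ℤ) = (e : ℤ) + 1 by push_cast; ring,
        (L_Ttop Bz ξ e et N h0 hee heven hN).1, zero_mul]
    · rw [show ((e + 2 : ℕ) : ℤ) = (e : ℤ) + 2 by push_cast; ring,
        (L_Ttop Bz ξ e et N h0 hee heven hN).2, zero_mul]
  have hT2 : ∑ m ∈ Finset.range (e + 3), TzF Bz ξ e N ((m : ℤ) - 2) * uGen ^ (2 * m) =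
      ∑ l ∈ Finset.range (e + 1), TzF Bz ξ e N l * uGen ^ (2 * l + 4) := by
    rw [Finset.sum_range_succ' _ (e + 2), Finset.sum_range_succ' _ (e + 1)]
    rw [show TzF Bz ξ e N ((0 : ℕ) - 2 : ℤ) = 0 from L_Tneg Bz ξ e et N h0 (by norm_num) hee,
      show TzF Bz ξ e N (((0 : ℕ) + 1 : ℕ) - 2 : ℤ) = 0 from
        L_Tneg Bz ξ e et N h0 (by norm_num) hee, zero_mul, zero_mul, add_zero, add_zero]
    refine Finset.sum_congr rfl fun l _ => ?_
    congr 2 <;> push_cast <;> omega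
  rw [hexp, hT1, ← hT2, ← Finset.sum_sub_distrib]
  refine Finset.sum_congr rfl fun m hm => ?_
  simp only [Finset.mem_range] at hm
  rw [← sub_mul, L_Tsub Bz ξ e et N h0 (by omega) hee hN]
end Comb2

theorem L_trunc (f : ℕ → KK) (M1 M2 : ℕ) (h : M1 ≤ M2)
    (hf : ∀ m, M1 ≤ m → m < M2 → f m = 0) :
    ∑ m ∈ Finset.range M2, f m = ∑ m ∈ Finset.range M1, f m :=
  (Finset.sum_subset (Finset.range_subset_range.2 h) fun m hm hm' => by
    simp only [Finset.mem_range] at hm hm'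
    exact hf m (by omega) hm).symm

section Comb3
variable (Bz : ℤ → KK) (ξ : KK) (e et N : ℕ)

theorem L_step2b (h0 : ∀ m : ℤ, m < 0 ∨ (et : ℤ) < m → qzF Bz m = 0)
    (hee : et ≤ e) (hu : uGen ≠ 0) (hv : vGen ≠ 0) :
    ∑ m ∈ Finset.range (e + 3), rzF Bz ξ e m * uGen ^ (2 * m) =
      (1 - ξ * (vGen⁻¹) ^ 2 * uGen ^ 2) *
          (∑ i ∈ Finset.range (et + 1), qzF Bz i * uGen ^ (2 * i)) -
        uGen ^ (2 * e + 4) * (1 - ξ * (vGen⁻¹) ^ 2 * (uGen⁻¹) ^ 2) *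
          (∑ i ∈ Finset.range (et + 1), qzF Bz i * (uGen⁻¹) ^ (2 * i)) := by
  have hS1 : ∑ m ∈ Finset.range (e + 3), qzF Bz m * uGen ^ (2 * m) =
      ∑ i ∈ Finset.range (et + 1), qzF Bz i * uGen ^ (2 * i) := by
    refine L_trunc _ _ _ (by omega) fun m hm _ => ?_
    beta_reduce
    rw [h0 m (Or.inr (by omega)), zero_mul]
  have hS2 : ∑ m ∈ Finset.range (e + 3), qzF Bz ((m : ℤ) - 1) * uGen ^ (2 * m) =
      uGen ^ 2 * ∑ i ∈ Finset.range (et + 1), qzF Bz i * uGen ^ (2 * i) := by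
    rw [Finset.sum_range_succ' _ (e + 2),
      show qzF Bz (((0 : ℕ) : ℤ) - 1) = 0 from h0 _ (Or.inl (by norm_num)), zero_mul,
      add_zero]
    have hc : ∀ i ∈ Finset.range (e + 2),
        qzF Bz (((i + 1 : ℕ) : ℤ) - 1) * uGen ^ (2 * (i + 1)) =
          qzF Bz i * uGen ^ (2 * i) * uGen ^ 2 := by
      intro i _
      rw [show ((i + 1 : ℕ) : ℤ) - 1 = (i : ℤ) by push_cast; ring]
      ring
    rw [Finset.sum_congr rfl hc, ← Finset.sum_mul,
      L_trunc (fun i => qzF Bz i * uGen ^ (2 * i)) (et + 1) (e + 2) (by omega)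
        (fun m hm _ => by beta_reduce; rw [h0 m (Or.inr (by omega)), zero_mul])]
    ring
  have key3 : ∀ i : ℕ, i ≤ e + 2 →
      uGen ^ (2 * (e + 2 - i)) = uGen ^ (2 * e + 4) * (uGen⁻¹) ^ (2 * i) := by
    intro i hi
    rw [inv_pow, eq_comm, mul_inv_eq_iff_eq_mul₀ (pow_ne_zero _ hu), ← pow_add]
    congr 1; omega
  have hS3 : ∑ m ∈ Finset.range (e + 3), qzF Bz ((e : ℤ) + 2 - m) * uGen ^ (2 * m) =
      uGen ^ (2 * e + 4) * ∑ i ∈ Finset.range (et + 1), qzF Bz i * (uGen⁻¹) ^ (2 * i) := by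
    have hrefl := Finset.sum_range_reflect
      (fun i => qzF Bz (i : ℤ) * uGen ^ (2 * (e + 2 - i))) (e + 3)
    have hL : ∑ m ∈ Finset.range (e + 3), qzF Bz ((e : ℤ) + 2 - m) * uGen ^ (2 * m) =
        ∑ j ∈ Finset.range (e + 3), qzF Bz (j : ℤ) * uGen ^ (2 * (e + 2 - j)) := by
      rw [← hrefl]
      refine Finset.sum_congr rfl fun m hm => ?_
      simp only [Finset.mem_range] at hm
      congr 2
      · push_cast; omega
      · omega
    rw [hL, L_trunc (fun j => qzF Bz (j : ℤ) * uGen ^ (2 * (e + 2 - j))) (et + 1) (e + 3)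
      (by omega) (fun m hm _ => by beta_reduce; rw [h0 m (Or.inr (by omega)), zero_mul]),
      Finset.mul_sum]
    refine Finset.sum_congr rfl fun i hi => ?_
    simp only [Finset.mem_range] at hi
    rw [key3 i (by omega)]
    ring
  have key4 : ∀ i : ℕ, i ≤ e + 1 →
      uGen ^ (2 * (e + 1 - i)) = uGen ^ (2 * e + 4) * (uGen⁻¹) ^ (2 * i) * (uGen⁻¹) ^ 2 := by
    intro i hi
    rw [inv_pow, inv_pow, eq_comm, mul_assoc, ← mul_inv, ← pow_add,
      mul_inv_eq_iff_eq_mul₀ (pow_ne_zero _ hu), ← pow_add]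
    congr 1; omega
  have hS4 : ∑ m ∈ Finset.range (e + 3), qzF Bz ((e : ℤ) + 1 - m) * uGen ^ (2 * m) =
      uGen ^ (2 * e + 4) * (uGen⁻¹) ^ 2 *
        ∑ i ∈ Finset.range (et + 1), qzF Bz i * (uGen⁻¹) ^ (2 * i) := by
    have hrefl := Finset.sum_range_reflect
      (fun i => qzF Bz ((i : ℤ) - 1) * uGen ^ (2 * (e + 2 - i))) (e + 3)
    have hL : ∑ m ∈ Finset.range (e + 3), qzF Bz ((e : ℤ) + 1 - m) * uGen ^ (2 * m) =
        ∑ j ∈ Finset.range (e + 3), qzF Bz ((j : ℤ) - 1) * uGen ^ (2 * (e + 2 - j)) := by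
      rw [← hrefl]
      refine Finset.sum_congr rfl fun m hm => ?_
      simp only [Finset.mem_range] at hm
      congr 2
      · push_cast; omega
      · omega
    rw [hL, Finset.sum_range_succ' _ (e + 2),
      show qzF Bz (((0 : ℕ) : ℤ) - 1) = 0 from h0 _ (Or.inl (by norm_num)), zero_mul,
      add_zero]
    have hc : ∀ i ∈ Finset.range (e + 2),
        qzF Bz (((i + 1 : ℕ) : ℤ) - 1) * uGen ^ (2 * (e + 2 - (i + 1))) =
          qzF Bz i * uGen ^ (2 * (e + 1 - i)) := by
      intro i hi
      congr 2
      · push_cast; ring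
      · omega
    rw [Finset.sum_congr rfl hc,
      L_trunc (fun i => qzF Bz i * uGen ^ (2 * (e + 1 - i))) (et + 1) (e + 2) (by omega)
        (fun m hm _ => by beta_reduce; rw [h0 m (Or.inr (by omega)), zero_mul]),
      Finset.mul_sum]
    refine Finset.sum_congr rfl fun i hi => ?_
    simp only [Finset.mem_range] at hi
    rw [key4 i (by omega)]
    ring
  have hsplit : ∑ m ∈ Finset.range (e + 3), rzF Bz ξ e m * uGen ^ (2 * m) =
      (∑ m ∈ Finset.range (e + 3), qzF Bz m * uGen ^ (2 * m)) -
        ξ * Yz (-1) * (∑ m ∈ Finset.range (e + 3), qzF Bz ((m : ℤ) - 1) * uGen ^ (2 * m)) -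
        (∑ m ∈ Finset.range (e + 3), qzF Bz ((e : ℤ) + 2 - m) * uGen ^ (2 * m)) +
        ξ * Yz (-1) * (∑ m ∈ Finset.range (e + 3), qzF Bz ((e : ℤ) + 1 - m) * uGen ^ (2 * m)) := by
    rw [Finset.mul_sum, Finset.mul_sum, ← Finset.sum_sub_distrib, ← Finset.sum_sub_distrib,
      ← Finset.sum_add_distrib]
    refine Finset.sum_congr rfl fun m _ => ?_
    rw [rzF]
    ring
  rw [hsplit, hS1, hS2, hS3, hS4, L_Yneg1 hv]
  ring
end Comb3

section Comb4
variable (Bz : ℤ → KK) (ξ : KK) (e et N : ℕ)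

theorem L_Tfinal (h0 : ∀ m : ℤ, m < 0 ∨ (et : ℤ) < m → qzF Bz m = 0)
    (hee : et ≤ e) (hN : e + et + 5 ≤ N) (hv : vGen ≠ 0) (l : ℕ) (hl : l ≤ e) :
    TzF Bz ξ e N l =
      (∑ j ∈ Finset.range (l + 1), Bz ((l : ℤ) - 2 * j) * Yz ((l : ℤ) - 2 * j)) -
        ξ * (∑ j ∈ Finset.range (l + 1), Bz ((l : ℤ) - 1 - 2 * j) * Yz ((l : ℤ) - 2 - 2 * j)) -
        (∑ j ∈ Finset.range (et + 1),
          Bz ((e : ℤ) + 2 - l + 2 * j) * Yz ((e : ℤ) + 2 - l + 2 * j)) +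
        ξ * (∑ j ∈ Finset.range (et + 1),
          Bz ((e : ℤ) + 1 - l + 2 * j) * Yz ((e : ℤ) - l + 2 * j)) := by
  have h1 : PzF Bz N l =
      ∑ j ∈ Finset.range (l + 1), Bz ((l : ℤ) - 2 * j) * Yz ((l : ℤ) - 2 * j) := by
    rw [PzF, L_trunc (fun j => qzF Bz ((l : ℤ) - 2 * j)) (l + 1) N (by omega)
      (fun m hm _ => by beta_reduce; exact h0 _ (Or.inl (by omega)))]
    simp [qzF]
  have h2 : Yz (-1) * PzF Bz N ((l : ℤ) - 1) =
      ∑ j ∈ Finset.range (l + 1), Bz ((l : ℤ) - 1 - 2 * j) * Yz ((l : ℤ) - 2 - 2 * j) := by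
    rw [PzF, L_trunc (fun j => qzF Bz ((l : ℤ) - 1 - 2 * j)) (l + 1) N (by omega)
      (fun m hm _ => by beta_reduce; exact h0 _ (Or.inl (by omega))), Finset.mul_sum]
    refine Finset.sum_congr rfl fun j _ => ?_
    rw [qzF, show Yz ((l : ℤ) - 2 - 2 * j) = Yz (-1) * Yz ((l : ℤ) - 1 - 2 * j) from by
      rw [L_Yadd hv]; congr 1; ring]
    ring
  have h3 : QzF Bz N ((e : ℤ) + 2 - l) =
      ∑ j ∈ Finset.range (et + 1),
        Bz ((e : ℤ) + 2 - l + 2 * j) * Yz ((e : ℤ) + 2 - l + 2 * j) := by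
    rw [QzF, L_trunc (fun j => qzF Bz ((e : ℤ) + 2 - l + 2 * j)) (et + 1) N (by omega)
      (fun m hm _ => by beta_reduce; exact h0 _ (Or.inr (by omega)))]
    simp [qzF]
  have h4 : Yz (-1) * QzF Bz N ((e : ℤ) + 1 - l) =
      ∑ j ∈ Finset.range (et + 1),
        Bz ((e : ℤ) + 1 - l + 2 * j) * Yz ((e : ℤ) - l + 2 * j) := by
    rw [QzF, L_trunc (fun j => qzF Bz ((e : ℤ) + 1 - l + 2 * j)) (et + 1) N (by omega)
      (fun m hm _ => by beta_reduce; exact h0 _ (Or.inr (by omega))), Finset.mul_sum]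
    refine Finset.sum_congr rfl fun j _ => ?_
    rw [qzF, show Yz ((e : ℤ) - l + 2 * j) = Yz (-1) * Yz ((e : ℤ) + 1 - l + 2 * j) from by
      rw [L_Yadd hv]; congr 1; ring]
    ring
  rw [TzF, h1, h3, mul_assoc ξ, h2, mul_assoc ξ, h4]
end Comb4

theorem L_step1 {K : Type} [Field K] (i e et d : ℕ) (hi : Even i) (he : e = et + d)
    (ξ v u FFn G1 G2 B1 B2 P : K) (hu : u ≠ 0) (hv : v ≠ 0)
    (h14 : (1 : K) - u ^ 4 ≠ 0)
    (hrec : FFn = Cfun i e et ξ v u * G1 + Cfun i e et ξ v u⁻¹ * G2)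
    (hG1 : (v * u) ^ et * G1 = B1) (hG2 : (v * u⁻¹) ^ et * G2 = B2)
    (hP : u ^ e * FFn = P) :
    P * (1 - u ^ 4) =
      (1 - ξ * (v⁻¹) ^ 2 * u ^ 2) * B1 -
        u ^ (2 * e + 4) * (1 - ξ * (v⁻¹) ^ 2 * (u⁻¹) ^ 2) * B2 := by
  have hvu : v * u ≠ 0 := mul_ne_zero hv hu
  have hvui : v * u⁻¹ ≠ 0 := mul_ne_zero hv (inv_ne_zero hu)
  have hd1 : (u⁻¹) ^ 2 - u ^ 2 = (1 - u ^ 4) / u ^ 2 := by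
    field_simp
  have hd2 : u ^ 2 - (u⁻¹) ^ 2 = -((1 - u ^ 4) / u ^ 2) := by
    field_simp
    ring
  have hz1 : u ^ (-((e : ℤ) - (et : ℤ)) - 2) = (u ^ (d + 2))⁻¹ := by
    rw [show -((e : ℤ) - (et : ℤ)) - 2 = -(((d + 2 : ℕ) : ℤ)) by push_cast [he]; ring,
      zpow_neg, zpow_natCast]
  have hz2 : (u⁻¹) ^ (-((e : ℤ) - (et : ℤ)) - 2) = u ^ (d + 2) := by
    rw [show -((e : ℤ) - (et : ℤ)) - 2 = -(((d + 2 : ℕ) : ℤ)) by push_cast [he]; ring,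
      inv_zpow, zpow_neg, inv_inv, zpow_natCast]
  have hG1' : G1 = ((v * u) ^ et)⁻¹ * B1 := by
    rw [← hG1, ← mul_assoc, inv_mul_cancel₀ (pow_ne_zero _ hvu), one_mul]
  have hG2' : G2 = ((v * u⁻¹) ^ et)⁻¹ * B2 := by
    rw [← hG2, ← mul_assoc, inv_mul_cancel₀ (pow_ne_zero _ hvui), one_mul]
  have hc1 : Cfun i e et ξ v u =
      (v ^ et * (u ^ (d + 2))⁻¹ * (1 - ξ * (v⁻¹) ^ 2 * u ^ 2) * u ^ 2) * (1 - u ^ 4)⁻¹ := by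
    rw [Cfun, if_pos hi, hz1, hd1, div_div_eq_mul_div, div_eq_mul_inv]
  have hc2 : Cfun i e et ξ v u⁻¹ =
      -((v ^ et * u ^ (d + 2) * (1 - ξ * (v⁻¹) ^ 2 * (u⁻¹) ^ 2) * u ^ 2) * (1 - u ^ 4)⁻¹) := by
    rw [Cfun, if_pos hi, hz2, inv_inv, hd2, div_neg, div_div_eq_mul_div, div_eq_mul_inv]
  rw [← hP, hrec, hc1, hc2, hG1', hG2', he]
  have hstepA : u ^ (et + d) *
      ((v ^ et * (u ^ (d + 2))⁻¹ * (1 - ξ * (v⁻¹) ^ 2 * u ^ 2) * u ^ 2) * (1 - u ^ 4)⁻¹ *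
          (((v * u) ^ et)⁻¹ * B1) +
        -((v ^ et * u ^ (d + 2) * (1 - ξ * (v⁻¹) ^ 2 * (u⁻¹) ^ 2) * u ^ 2) * (1 - u ^ 4)⁻¹) *
          (((v * u⁻¹) ^ et)⁻¹ * B2)) * (1 - u ^ 4) =
      u ^ (et + d) *
        ((v ^ et * (u ^ (d + 2))⁻¹ * (1 - ξ * (v⁻¹) ^ 2 * u ^ 2) * u ^ 2) *
            (((v * u) ^ et)⁻¹ * B1) -
          (v ^ et * u ^ (d + 2) * (1 - ξ * (v⁻¹) ^ 2 * (u⁻¹) ^ 2) * u ^ 2) *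
            (((v * u⁻¹) ^ et)⁻¹ * B2)) := by
    linear_combination (u ^ (et + d) *
      ((v ^ et * (u ^ (d + 2))⁻¹ * (1 - ξ * (v⁻¹) ^ 2 * u ^ 2) * u ^ 2) *
          (((v * u) ^ et)⁻¹ * B1) -
        (v ^ et * u ^ (d + 2) * (1 - ξ * (v⁻¹) ^ 2 * (u⁻¹) ^ 2) * u ^ 2) *
          (((v * u⁻¹) ^ et)⁻¹ * B2))) * inv_mul_cancel₀ h14
  rw [hstepA,
    show ((v * u) ^ et)⁻¹ = (v ^ et)⁻¹ * (u ^ et)⁻¹ by rw [mul_pow, mul_inv],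
    show ((v * u⁻¹) ^ et)⁻¹ = (v ^ et)⁻¹ * u ^ et by rw [mul_pow, mul_inv, inv_pow, inv_inv]]
  have r1 : u ^ et * (u ^ et)⁻¹ = 1 := mul_inv_cancel₀ (pow_ne_zero _ hu)
  have r2 : v ^ et * (v ^ et)⁻¹ = 1 := mul_inv_cancel₀ (pow_ne_zero _ hv)
  have r3 : u ^ (d + 2) * (u ^ (d + 2))⁻¹ = 1 := mul_inv_cancel₀ (pow_ne_zero _ hu)
  linear_combination ((1 - ξ * (v⁻¹) ^ 2 * u ^ 2) * B1 * (v ^ et * (v ^ et)⁻¹) *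
      (u ^ (d + 2) * (u ^ (d + 2))⁻¹)) * r1 +
    ((1 - ξ * (v⁻¹) ^ 2 * u ^ 2) * B1 * (u ^ (d + 2) * (u ^ (d + 2))⁻¹) -
      u ^ (2 * (et + d) + 4) * (1 - ξ * (v⁻¹) ^ 2 * (u⁻¹) ^ 2) * B2) * r2 +
    ((1 - ξ * (v⁻¹) ^ 2 * u ^ 2) * B1) * r3


theorem statement10 (n : ℕ) (a : ℕ → ℕ) (ε : ℕ → ℤ) (h : IsNEGK n a ε)
    (hne : Even n) (hn2 : 2 ≤ n)
    -- `A i = a_i(H,Y)` are the coefficients of `𝓖(H;Y,X)` (Laurent polynomials in `Y`)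
    (A : ℕ → KK)
    (hA : uGen ^ eInv a n * FF a ε n vGen uGen =
      ∑ i ∈ Finset.range (eInv a n + 1), A i * uGen ^ (2 * i))
    (hAY : ∀ i, ∃ g : RatFunc ℚ, A i = RatFunc.C g)
    -- `Bz i = a_i(H_{n-1},Y)`, extended by `0` outside `0 ≤ i ≤ 𝔢_{n-1}`
    (Bz : ℤ → KK)
    (hB : uGen ^ eInv a (n - 1) * FF a ε (n - 1) vGen uGen =
      ∑ i ∈ Finset.range (eInv a (n - 1) + 1), Bz i * uGen ^ (2 * i))
    (hBY : ∀ m : ℤ, ∃ g : RatFunc ℚ, Bz m = RatFunc.C g)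
    (hB0 : ∀ m : ℤ, (m < 0 ∨ (eInv a (n - 1) : ℤ) < m) → Bz m = 0) :
    ∀ l : ℕ, l ≤ eInv a n →
      A l =
        (∑ j ∈ Finset.range (l + 1),
            Bz ((l : ℤ) - 2 * j) * Yz ((l : ℤ) - 2 * j)) -
          ((ε (n - 1) : ℤ) : KK) *
            (∑ j ∈ Finset.range (l + 1),
              Bz ((l : ℤ) - 1 - 2 * j) * Yz ((l : ℤ) - 2 - 2 * j)) -
          (∑ j ∈ Finset.range (eInv a (n - 1) + 1),
            Bz ((eInv a n : ℤ) + 2 - l + 2 * j) * Yz ((eInv a n : ℤ) + 2 - l + 2 * j)) +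
          ((ε (n - 1) : ℤ) : KK) *
            (∑ j ∈ Finset.range (eInv a (n - 1) + 1),
              Bz ((eInv a n : ℤ) + 1 - l + 2 * j) * Yz ((eInv a n : ℤ) - l + 2 * j)) := by 
  intro l hl
  obtain ⟨k, rfl⟩ : ∃ k, n = k + 2 := ⟨n - 2, by omega⟩
  simp only [show k + 2 - 1 = k + 1 from rfl] at hB hB0 ⊢
  set e := eInv a (k + 2) with he_def
  set et := eInv a (k + 1) with het_def
  set ξ : KK := ((ε (k + 1) : ℤ) : KK) with hxi_def
  have hu : uGen ≠ 0 := uGen_ne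
  have hv : vGen ≠ 0 := vGen_ne
  have h14 : (1 : KK) - uGen ^ 4 ≠ 0 := by
    rw [sub_ne_zero]
    intro hc
    have h1 : (algebraMap (Polynomial (RatFunc ℚ)) KK) 1 =
        algebraMap (Polynomial (RatFunc ℚ)) KK (Polynomial.X ^ 4) := by
      rw [map_one, map_pow, RatFunc.algebraMap_X]; exact hc
    have h2 := IsFractionRing.injective (Polynomial (RatFunc ℚ)) KK h1
    have h3 := congrArg Polynomial.natDegree h2
    simp [Polynomial.natDegree_X_pow] at h3
  have heven : Even e := L_eEven a hne
  have hee : et ≤ e := L_etle h hne hn2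
  have h0 : ∀ m : ℤ, m < 0 ∨ (et : ℤ) < m → qzF Bz m = 0 := fun m hm => by
    rw [qzF, hB0 m hm, zero_mul]
  set N := e + et + 5 with hN_def
  have hmapB : ∀ (t : KK), Transcendental (RatFunc ℚ) t →
      t ^ et * FF a ε (k + 1) vGen t =
        ∑ i ∈ Finset.range (et + 1), Bz i * t ^ (2 * i) := by
    intro t ht
    have h1 := congrArg (subHom ht) hB
    rw [map_mul, map_pow, map_FF, subHom_v, subHom_X, map_sum] at h1
    rw [h1]
    refine Finset.sum_congr rfl fun i _ => ?_
    rw [map_mul, map_pow, subHom_X]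
    obtain ⟨g, hg⟩ := hBY i
    rw [hg, subHom_C]
  have hG1 : (vGen * uGen) ^ et * FF a ε (k + 1) vGen (vGen * uGen) =
      ∑ i ∈ Finset.range (et + 1), qzF Bz i * uGen ^ (2 * i) := by
    rw [hmapB (vGen * uGen) vu_trans]
    refine Finset.sum_congr rfl fun i _ => ?_
    rw [qzF, L_Ynat, mul_pow]
    ring
  have hG2 : (vGen * uGen⁻¹) ^ et * FF a ε (k + 1) vGen (vGen * uGen⁻¹) =
      ∑ i ∈ Finset.range (et + 1), qzF Bz i * (uGen⁻¹) ^ (2 * i) := by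
    rw [hmapB (vGen * uGen⁻¹) vui_trans]
    refine Finset.sum_congr rfl fun i _ => ?_
    rw [qzF, L_Ynat, mul_pow]
    ring
  have hrec : FF a ε (k + 2) vGen uGen =
      Cfun (k + 2) e et ξ vGen uGen * FF a ε (k + 1) vGen (vGen * uGen) +
        Cfun (k + 2) e et ξ vGen uGen⁻¹ * FF a ε (k + 1) vGen (vGen * uGen⁻¹) := by
    simp only [FF, if_pos hne, one_mul, he_def, het_def, hxi_def]
  have step1 := L_step1 (k + 2) e et (e - et) hne (by omega) ξ vGen uGen
    (FF a ε (k + 2) vGen uGen) (FF a ε (k + 1) vGen (vGen * uGen))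
    (FF a ε (k + 1) vGen (vGen * uGen⁻¹))
    (∑ i ∈ Finset.range (et + 1), qzF Bz i * uGen ^ (2 * i))
    (∑ i ∈ Finset.range (et + 1), qzF Bz i * (uGen⁻¹) ^ (2 * i))
    (∑ i ∈ Finset.range (e + 1), A i * uGen ^ (2 * i))
    hu hv h14 hrec hG1 hG2 hA
  have step2 := (L_step2a Bz ξ e et N h0 hee heven (by omega)).trans
    (L_step2b Bz ξ e et h0 hee hu hv)
  have hPT : (∑ i ∈ Finset.range (e + 1), A i * uGen ^ (2 * i)) =
      ∑ i ∈ Finset.range (e + 1), TzF Bz ξ e N i * uGen ^ (2 * i) := by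
    refine mul_right_cancel₀ h14 (step1.trans ?_)
    rw [Finset.sum_mul]
    exact step2.symm
  have hdiff : ∑ i ∈ Finset.range (e + 1),
      (A i - TzF Bz ξ e N i) * uGen ^ (2 * i) = 0 := by
    calc ∑ i ∈ Finset.range (e + 1), (A i - TzF Bz ξ e N i) * uGen ^ (2 * i)
        = ∑ i ∈ Finset.range (e + 1),
            (A i * uGen ^ (2 * i) - TzF Bz ξ e N i * uGen ^ (2 * i)) := by
          refine Finset.sum_congr rfl fun i _ => ?_
          rw [sub_mul]
      _ = (∑ i ∈ Finset.range (e + 1), A i * uGen ^ (2 * i)) -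
            ∑ i ∈ Finset.range (e + 1), TzF Bz ξ e N i * uGen ^ (2 * i) :=
          Finset.sum_sub_distrib _ _
      _ = 0 := sub_eq_zero.2 hPT
  have hTmem : ∀ m : ℤ, ∃ g, TzF Bz ξ e N m = RatFunc.C g := by
    intro m
    suffices hmem : TzF Bz ξ e N m ∈ (RatFunc.C : RatFunc ℚ →+* KK).fieldRange by
      obtain ⟨g, hg⟩ := RingHom.mem_fieldRange.1 hmem
      exact ⟨g, hg.symm⟩
    have hq : ∀ r : ℤ, qzF Bz r ∈ (RatFunc.C : RatFunc ℚ →+* KK).fieldRange := by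
      intro r
      rw [qzF]
      refine mul_mem ?_ ?_
      · obtain ⟨g, hg⟩ := hBY r
        exact RingHom.mem_fieldRange.2 ⟨g, hg.symm⟩
      · rw [Yz]
        exact zpow_mem (RingHom.mem_fieldRange.2 ⟨RatFunc.X, rfl⟩) _
    have hPm : ∀ L : ℤ, PzF Bz N L ∈ (RatFunc.C : RatFunc ℚ →+* KK).fieldRange :=
      fun L => by rw [PzF]; exact sum_mem fun i _ => hq _
    have hQm : ∀ L : ℤ, QzF Bz N L ∈ (RatFunc.C : RatFunc ℚ →+* KK).fieldRange :=
      fun L => by rw [QzF]; exact sum_mem fun i _ => hq _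
    have hxm : ξ ∈ (RatFunc.C : RatFunc ℚ →+* KK).fieldRange :=
      RingHom.mem_fieldRange.2 ⟨((ε (k + 1) : ℤ) : RatFunc ℚ), by rw [hxi_def, map_intCast]⟩
    have hym : Yz (-1) ∈ (RatFunc.C : RatFunc ℚ →+* KK).fieldRange := by
      rw [Yz]
      exact zpow_mem (RingHom.mem_fieldRange.2 ⟨RatFunc.X, rfl⟩) _
    rw [TzF]
    exact add_mem (sub_mem (sub_mem (hPm _) (mul_mem (mul_mem hxm hym) (hPm _))) (hQm _))
      (mul_mem (mul_mem hxm hym) (hQm _))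
  have hAT := extractCoeff (e + 1) (fun i => A i - TzF Bz ξ e N i)
    (fun i => by
      obtain ⟨g1, hg1⟩ := hAY i
      obtain ⟨g2, hg2⟩ := hTmem i
      exact ⟨g1 - g2, by beta_reduce; rw [hg1, hg2, map_sub]⟩) hdiff
  have hAl : A l = TzF Bz ξ e N l := by
    have h6 := hAT l (by omega)
    linear_combination h6
  rw [hAl, L_Tfinal Bz ξ e et N h0 hee (by omega) hv l hl]
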